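/- First-order Chapman-Enskog moment equations for the D3Q7 thermal model: let w̄ ∈ (0,1), c_s² = w̄/3, Δt > 0, let Λ = diag(ς_0,…,ς_6) with all ς_k ≠ 0, let ρc_v > 0, and let a ∈ ℝ (representing ∂_{t₁}T), b ∈ ℝ³ (representing ∇₁T), F̄ ∈ ℝ, and g⁽¹⁾ ∈ ℝ⁷ with Σ_{i=0}^{6} g⁽¹⁾_i = 0. If for every i = 0,…,6 the first-order equation ρc_v w_i a + (c_i·b) w_i = −(1/Δt)(M⁻¹ΛM g⁽¹⁾)_i + w_i F̄ holds, then: (i) ρc_v a = F̄, and (ii) ς_k (M g⁽¹⁾)_k = −Δt c_s² b_k for k = 1, 2, 3 (the three momentum-moment rows), i.e. (M g⁽¹⁾)_k = −(Δt/ς_k) c_s² b_k. -/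

import Mathlib

open Finset

/-- The 7 discrete velocities of the D3Q7 lattice. -/
def c : Fin 7 → Fin 3 → ℝ :=
  ![![0,0,0], ![1,0,0], ![-1,0,0], ![0,1,0], ![0,-1,0], ![0,0,1], ![0,0,-1]]

/-- The D3Q7 weights: `w_0 = 1 - w̄` and `w_i = w̄/6` for `i = 1,…,6`. -/
noncomputable def w (wb : ℝ) : Fin 7 → ℝ :=
  ![1 - wb, wb/6, wb/6, wb/6, wb/6, wb/6, wb/6]

/-- The non-orthogonal D3Q7 transformation matrix. -/
def M : Matrix (Fin 7) (Fin 7) ℝ :=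
  !![1, 1, 1, 1, 1, 1, 1;
     0, 1, -1, 0, 0, 0, 0;
     0, 0, 0, 1, -1, 0, 0;
     0, 0, 0, 0, 0, 1, -1;
     0, 1, 1, 1, 1, 1, 1;
     0, 1, 1, -1, -1, 0, 0;
     0, 1, 1, 0, 0, -1, -1]


noncomputable def Minv : Matrix (Fin 7) (Fin 7) ℝ :=
  !![1, 0, 0, 0, -1, 0, 0;
     0, 1/2, 0, 0, 1/6, 1/6, 1/6;
     0, -1/2, 0, 0, 1/6, 1/6, 1/6;
     0, 0, 1/2, 0, 1/6, -1/3, 1/6;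
     0, 0, -1/2, 0, 1/6, -1/3, 1/6;
     0, 0, 0, 1/2, 1/6, 1/6, -1/3;
     0, 0, 0, -1/2, 1/6, 1/6, -1/3]

lemma M_mul_Minv : M * Minv = 1 := by
  ext i j
  fin_cases i <;> fin_cases j <;>
    norm_num [M, Minv, Matrix.mul_apply, Fin.sum_univ_succ, Matrix.cons_val_zero, Matrix.cons_val_succ, Matrix.one_apply, Fin.ext_iff]

lemma Minv_mul_M : Minv * M = 1 := by
  ext i j
  fin_cases i <;> fin_cases j <;>
    norm_num [M, Minv, Matrix.mul_apply, Fin.sum_univ_succ, Matrix.cons_val_zero, Matrix.cons_val_succ, Matrix.one_apply, Fin.ext_iff]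

lemma M_inv_eq : M⁻¹ = Minv := Matrix.inv_eq_right_inv M_mul_Minv

/-- First-order Chapman–Enskog moment equations for the D3Q7 thermal model:
the conserved moment gives `ρc_v ∂_{t₁}T = F̄`, and the momentum-moment rows
give the local gradient formulas `ς_k (M g⁽¹⁾)_k = -Δt c_s² (∇₁T)_k`. -/
theorem d3q7_chapman_enskog_first_order
    (wb : ℝ) (hwb : wb ∈ Set.Ioo (0:ℝ) 1)
    (Δt : ℝ) (hΔt : 0 < Δt)
    (ς : Fin 7 → ℝ) (hς : ∀ k, ς k ≠ 0)
    (rcv : ℝ) (hrcv : 0 < rcv)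
    (a : ℝ) (b : Fin 3 → ℝ) (Fb : ℝ)
    (g1 : Fin 7 → ℝ) (hg1 : ∑ i, g1 i = 0)
    (h : ∀ i : Fin 7,
      rcv * w wb i * a + (∑ α, c i α * b α) * w wb i =
        -(1/Δt) * ((M⁻¹ * Matrix.diagonal ς * M).mulVec g1) i + w wb i * Fb) :
    rcv * a = Fb ∧
    (ς 1 * (M.mulVec g1) 1 = -Δt * (wb/3) * b 0) ∧
    (ς 2 * (M.mulVec g1) 2 = -Δt * (wb/3) * b 1) ∧
    (ς 3 * (M.mulVec g1) 3 = -Δt * (wb/3) * b 2) := by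
  have hMi := M_inv_eq
  set y : Fin 7 → ℝ := (M⁻¹ * Matrix.diagonal ς * M).mulVec g1 with hy
  have key : ∀ k : Fin 7, (M.mulVec y) k = ς k * (M.mulVec g1) k := by
    intro k
    have hM2 : M * (M⁻¹ * Matrix.diagonal ς * M) = Matrix.diagonal ς * M := by
      rw [hMi, ← Matrix.mul_assoc, ← Matrix.mul_assoc, M_mul_Minv, Matrix.one_mul]
    have : M.mulVec y = (Matrix.diagonal ς * M).mulVec g1 := by
      rw [hy, Matrix.mulVec_mulVec, hM2]
    rw [this, ← Matrix.mulVec_mulVec, Matrix.mulVec_diagonal]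
  have hΔt' : Δt ≠ 0 := ne_of_gt hΔt
  have hyval : ∀ i : Fin 7, y i =
      Δt * (w wb i * Fb - rcv * w wb i * a - (∑ α, c i α * b α) * w wb i) := by
    intro i
    have hi := h i
    field_simp at hi ⊢
    linarith [hi]
  have hsum3 : ∀ i : Fin 7, (∑ α, c i α * b α) =
      c i 0 * b 0 + c i 1 * b 1 + c i 2 * b 2 := by
    intro i; simp [Fin.sum_univ_three]
  have hMg0 : (M.mulVec g1) 0 = 0 := by
    simpa [M, Matrix.mulVec, dotProduct, Fin.sum_univ_succ, Matrix.cons_val_zero, Matrix.cons_val_succ] using hg1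
  constructor
  · have h0 := key 0
    rw [hMg0, mul_zero] at h0
    have : (M.mulVec y) 0 = ∑ i, y i := by
      simp [M, Matrix.mulVec, dotProduct, Fin.sum_univ_succ, Matrix.cons_val_zero, Matrix.cons_val_succ]
    rw [this] at h0
    simp only [hyval, hsum3, Fin.sum_univ_succ, Finset.sum_empty, Fin.sum_univ_zero] at h0
    simp only [c, w, Matrix.cons_val_zero, Matrix.cons_val_succ, Matrix.cons_val_one, Matrix.cons_val_two, Matrix.cons_val_three, Matrix.cons_val_four, Matrix.head_cons, Matrix.tail_cons, Matrix.vecHead, Matrix.vecTail] at h0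
    norm_num at h0
    have : Δt * (Fb - rcv * a) = 0 := by ring_nf; ring_nf at h0; linarith
    have := mul_eq_zero.mp this
    rcases this with h' | h'
    · exact absurd h' hΔt'
    · linarith
  refine ⟨?_, ?_, ?_⟩ <;>
  · rw [← key]
    simp only [Matrix.mulVec, dotProduct, Fin.sum_univ_succ, Fin.sum_univ_zero, M,
      Matrix.cons_val_zero, Matrix.cons_val_succ, Matrix.of_apply, Matrix.cons_val_one, Matrix.cons_val_two, Matrix.cons_val_three, Matrix.cons_val_four, Matrix.head_cons, Matrix.tail_cons, Matrix.vecHead, Matrix.vecTail]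
    simp only [hyval, hsum3]
    simp only [c, w, Matrix.cons_val_zero, Matrix.cons_val_succ, Matrix.cons_val_one, Matrix.cons_val_two, Matrix.cons_val_three, Matrix.cons_val_four, Matrix.head_cons, Matrix.tail_cons, Matrix.vecHead, Matrix.vecTail]
    simp [Matrix.vecHead, Matrix.vecTail, Matrix.cons_val]
    ring_nf
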